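/- Consider a Facility Location game with β_v > 0 for all nodes v, and let α ≥ 1. For a coalitional deviation from profile s^j to profile s^{j+1} by a nonempty coalition I_j (meaning s^{j+1}_i = s^j_i for all i ∉ I_j and c_i(s^j) > α·c_i(s^{j+1}) for every i ∈ I_j), define the weighted damage dam(I_j) = Π_{i ∉ I_j} (c_i(s^{j+1})/c_i(s^j))^{w_i}, and for a set I of agents let W(I) = Σ_{i ∈ I} w_i. Suppose that for every cycle of profiles s^1, …, s^k with s^1 = s^k, k ≥ 2, formed by consecutive such coalitional deviations of coalitions I_1, …, I_{k−1}, it holds that α ≥ max_{1 ≤ j ≤ k−1} dam(I_j)^{1/W(I_j)}. Then the game has an α-approximate strong equilibrium. -/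

import Mathlib

open Finset
open scoped Classical

/-- A Facility Location game: nodes `V`, agents `A`, connection costs `d`,
facility opening costs `β`, agent locations `u` and positive weights `w`. -/
structure FLGame (V A : Type*) [Fintype V] [Fintype A] where
  d : V → V → ℝ
  d_nonneg : ∀ x y, 0 ≤ d x y
  β : V → ℝ
  β_nonneg : ∀ v, 0 ≤ β v
  u : A → V
  w : A → ℝ
  w_pos : ∀ i, 0 < w i
  V_nonempty : Nonempty V
  A_nonempty : Nonempty A

namespace FLGame

variable {V A : Type*} [Fintype V] [Fintype A]

/-- Total weight forwarded to node `v` under profile `s`. -/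
noncomputable def Wmass (G : FLGame V A) (s : A → V) (v : V) : ℝ :=
  ∑ j, if s j = v then G.w j else 0

/-- Individual cost of agent `i` under profile `s`. -/
noncomputable def cost (G : FLGame V A) (s : A → V) (i : A) : ℝ :=
  G.w i * G.d (G.u i) (s i) + G.w i * G.β (s i) / G.Wmass s (s i)

/-- Social cost of profile `s`. -/
noncomputable def social (G : FLGame V A) (s : A → V) : ℝ := ∑ i, G.cost s i

/-- All agents have unit weight. -/
def Unweighted (G : FLGame V A) : Prop := ∀ i, G.w i = 1

/-- `d` is a metric on `V`. -/
def Metric (G : FLGame V A) : Prop :=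
  (∀ x, G.d x x = 0) ∧ (∀ x y, G.d x y = G.d y x) ∧ (∀ x y, 0 ≤ G.d x y) ∧
    (∀ x y z, G.d x z ≤ G.d x y + G.d y z)

/-- `s'` is obtained from `s` by a best-response move of agent `i`. -/
def BRMove (G : FLGame V A) (s s' : A → V) (i : A) : Prop :=
  (∀ j, j ≠ i → s' j = s j) ∧ G.cost s' i < G.cost s i ∧
    (∀ s'' : A → V, (∀ j, j ≠ i → s'' j = s j) → G.cost s' i ≤ G.cost s'' i)

/-- `s` is reached from `s0` by iterative best response. -/
def ReachedByIBR (G : FLGame V A) (s0 s : A → V) : Prop :=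
  ∃ (T : ℕ) (seq : ℕ → A → V), seq 0 = s0 ∧ seq T = s ∧
    ∀ t, t < T → ∃ i, G.BRMove (seq t) (seq (t + 1)) i

/-- `s` is a pure Nash equilibrium. -/
def IsPNE (G : FLGame V A) (s : A → V) : Prop :=
  ∀ (i : A) (v : V), G.cost s i ≤ G.cost (Function.update s i v) i

/-- The nonempty coalition `I` deviates from `s` to `s'`, every member improving
by a factor strictly more than `α`. -/
def CoalDev (G : FLGame V A) (α : ℝ) (s s' : A → V) (I : Finset A) : Prop :=
  I.Nonempty ∧ (∀ j ∉ I, s' j = s j) ∧ ∀ i ∈ I, α * G.cost s' i < G.cost s i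

/-- `s` is an `α`-approximate strong equilibrium. -/
def ApproxSE (G : FLGame V A) (α : ℝ) (s : A → V) : Prop :=
  ¬ ∃ (I : Finset A) (s' : A → V), G.CoalDev α s s' I

end FLGame


section Aux

open Real

variable {V A : Type*} [Fintype V] [Fintype A]

lemma cost_pos (G : FLGame V A) (hβ : ∀ v, 0 < G.β v) (s : A → V) (i : A) :
    0 < G.cost s i := by
  have hW : G.w i ≤ G.Wmass s (s i) := by
    have := Finset.single_le_sum (f := fun j => if s j = s i then G.w j else 0)
      (fun j _ => by split_ifs with hji; exacts [(G.w_pos j).le, le_rfl]) (Finset.mem_univ i)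
    simpa [FLGame.Wmass] using this
  have hWpos : 0 < G.Wmass s (s i) := lt_of_lt_of_le (G.w_pos i) hW
  have h2 : 0 < G.w i * G.β (s i) / G.Wmass s (s i) :=
    div_pos (mul_pos (G.w_pos i) (hβ _)) hWpos
  have h1 : 0 ≤ G.w i * G.d (G.u i) (s i) :=
    mul_nonneg (G.w_pos i).le (G.d_nonneg _ _)
  unfold FLGame.cost
  linarith

/-- The weighted potential. -/
noncomputable def phi (G : FLGame V A) (s : A → V) : ℝ :=
  ∏ i, (G.cost s i) ^ (G.w i)

lemma phi_pos (G : FLGame V A) (hβ : ∀ v, 0 < G.β v) (s : A → V) : 0 < phi G s :=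
  Finset.prod_pos fun i _ => Real.rpow_pos_of_pos (cost_pos G hβ s i) _

lemma phi_step (G : FLGame V A) (hβ : ∀ v, 0 < G.β v) {α : ℝ} (hα : 1 ≤ α)
    {s s' : A → V} {I : Finset A} (hdev : G.CoalDev α s s' I)
    (hdam : (∏ i ∈ Finset.univ \ I,
        (G.cost s' i / G.cost s i) ^ (G.w i)) ^ (1 / ∑ i ∈ I, G.w i) ≤ α) :
    phi G s' < phi G s := by
  obtain ⟨hIne, -, himp⟩ := hdev
  have hαpos : (0:ℝ) < α := lt_of_lt_of_le one_pos hα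
  set r : A → ℝ := fun i => G.cost s' i / G.cost s i with hr
  have hrpos : ∀ i, 0 < r i := fun i =>
    div_pos (cost_pos G hβ s' i) (cost_pos G hβ s i)
  set W : ℝ := ∑ i ∈ I, G.w i with hWdef
  have hWpos : 0 < W := Finset.sum_pos (fun i _ => G.w_pos i) hIne
  set D : ℝ := ∏ i ∈ Finset.univ \ I, (r i) ^ (G.w i) with hD
  have hDpos : 0 < D :=
    Finset.prod_pos fun i _ => Real.rpow_pos_of_pos (hrpos i) _
  -- D ≤ α ^ W
  have hDle : D ≤ α ^ W := by
    have h1 : (D ^ (1 / W)) ^ W ≤ α ^ W :=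
      Real.rpow_le_rpow (Real.rpow_nonneg hDpos.le _) hdam hWpos.le
    have h2 : (D ^ (1 / W)) ^ W = D := by
      rw [← Real.rpow_mul hDpos.le, one_div_mul_cancel hWpos.ne', Real.rpow_one]
    rwa [h2] at h1
  -- ∏_{i ∈ I} r i ^ w i < α⁻¹ ^ W
  have hP : (∏ i ∈ I, (r i) ^ (G.w i)) < α⁻¹ ^ W := by
    have := Finset.prod_lt_prod_of_nonempty
      (f := fun i => (r i) ^ (G.w i)) (g := fun i => α⁻¹ ^ (G.w i))
      (fun i _ => Real.rpow_pos_of_pos (hrpos i) _)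
      (fun i hi => by
        refine Real.rpow_lt_rpow (hrpos i).le ?_ (G.w_pos i)
        have hmul := (mul_lt_mul_iff_right₀ (inv_pos.mpr hαpos)).mpr (himp i hi)
        rw [← mul_assoc, inv_mul_cancel₀ hαpos.ne', one_mul] at hmul
        rw [hr]
        rw [div_lt_iff₀ (cost_pos G hβ s i)]
        exact hmul) hIne
    calc (∏ i ∈ I, (r i) ^ (G.w i)) < ∏ i ∈ I, α⁻¹ ^ (G.w i) := this
      _ = α⁻¹ ^ W := (Real.rpow_sum_of_pos (by positivity) _ _).symm
  -- total product < 1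
  have htot : (∏ i, (r i) ^ (G.w i)) < 1 := by
    have hsplit : (∏ i, (r i) ^ (G.w i))
        = D * ∏ i ∈ I, (r i) ^ (G.w i) := by
      rw [hD, Finset.prod_sdiff (Finset.subset_univ I)]
    rw [hsplit]
    have h1 : D * ∏ i ∈ I, (r i) ^ (G.w i) < D * α⁻¹ ^ W :=
      (mul_lt_mul_iff_right₀ hDpos).mpr hP
    have h2 : D * α⁻¹ ^ W ≤ α ^ W * α⁻¹ ^ W :=
      mul_le_mul_of_nonneg_right hDle (Real.rpow_nonneg (by positivity) _)
    have h3 : α ^ W * α⁻¹ ^ W = 1 := by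
      rw [Real.inv_rpow hαpos.le, mul_inv_cancel₀ (Real.rpow_pos_of_pos hαpos _).ne']
    linarith
  have hphi : phi G s' = phi G s * ∏ i, (r i) ^ (G.w i) := by
    rw [phi, phi, ← Finset.prod_mul_distrib]
    refine Finset.prod_congr rfl fun i _ => ?_
    rw [← Real.mul_rpow (cost_pos G hβ s i).le (hrpos i).le, hr,
      mul_div_cancel₀ _ (cost_pos G hβ s i).ne']
  rw [hphi]
  calc phi G s * ∏ i, (r i) ^ (G.w i) < phi G s * 1 :=
        (mul_lt_mul_iff_right₀ (phi_pos G hβ s)).mpr htot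
    _ = phi G s := mul_one _

end Aux

/-- If for every cycle of coalitional deviations the maximal weighted
damage `dam(I_j)^{1/W(I_j)}` is at most `α`, then the game has an `α`-approximate
strong equilibrium. -/
theorem stmt9 {V A : Type*} [Fintype V] [Fintype A] (G : FLGame V A)
    (hβ : ∀ v, 0 < G.β v) (α : ℝ) (hα : 1 ≤ α)
    (h : ∀ k : ℕ, 2 ≤ k → ∀ (seq : ℕ → A → V) (I : ℕ → Finset A),
      seq 1 = seq k →
      (∀ j, 1 ≤ j → j ≤ k - 1 → G.CoalDev α (seq j) (seq (j + 1)) (I j)) →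
      ∀ j, 1 ≤ j → j ≤ k - 1 →
        (∏ i ∈ Finset.univ \ I j,
            (G.cost (seq (j + 1)) i / G.cost (seq j) i) ^ (G.w i)) ^
          (1 / ∑ i ∈ I j, G.w i) ≤ α) :
    ∃ s : A → V, G.ApproxSE α s := by
  by_contra hno
  push_neg at hno
  have hdev : ∀ s : A → V, ∃ (I : Finset A) (s' : A → V), G.CoalDev α s s' I := by
    intro s
    have := hno s
    rw [FLGame.ApproxSE, not_not] at this
    exact this
  choose Ic nxt hnxt using hdev
  -- hnxt : ∀ s, G.CoalDev α s (nxt s (?)) ... careful with choose order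
  have : Nonempty V := G.V_nonempty
  have : Nonempty (A → V) := ⟨fun _ => Classical.arbitrary V⟩
  set s0 : A → V := Classical.arbitrary (A → V) with hs0
  set seq : ℕ → A → V := fun n => nxt^[n] s0 with hseq
  have hstep : ∀ n, G.CoalDev α (seq n) (seq (n+1)) (Ic (seq n)) := by
    intro n
    have : seq (n+1) = nxt (seq n) := Function.iterate_succ_apply' nxt n s0
    rw [this]
    exact hnxt (seq n)
  obtain ⟨a, b, hab, heq⟩ := Finite.exists_ne_map_eq_of_infinite seq
  wlog hlt : a < b generalizing a b
  · exact this b a hab.symm heq.symm (by omega)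
  set k : ℕ := b - a + 1 with hk
  have hk2 : 2 ≤ k := by omega
  set seq2 : ℕ → A → V := fun t => seq (a + t - 1) with hseq2
  set Icoal : ℕ → Finset A := fun j => Ic (seq (a + j - 1)) with hIcoal
  have hcyc : seq2 1 = seq2 k := by
    simp only [hseq2]
    have h1 : a + 1 - 1 = a := by omega
    have h2 : a + k - 1 = b := by omega
    rw [h1, h2, heq]
  have hdevs : ∀ j, 1 ≤ j → j ≤ k - 1 →
      G.CoalDev α (seq2 j) (seq2 (j + 1)) (Icoal j) := by
    intro j hj1 hj2
    have h1 : a + (j + 1) - 1 = (a + j - 1) + 1 := by omega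
    simp only [hseq2, hIcoal, h1]
    exact hstep (a + j - 1)
  have hbounds := h k hk2 seq2 Icoal hcyc hdevs
  have hphistep : ∀ j, 1 ≤ j → j ≤ k - 1 → phi G (seq2 (j+1)) < phi G (seq2 j) :=
    fun j hj1 hj2 => phi_step G hβ hα (hdevs j hj1 hj2) (hbounds j hj1 hj2)
  have hchain : ∀ m, 1 ≤ m → m ≤ k - 1 → phi G (seq2 (m+1)) < phi G (seq2 1) := by
    intro m
    induction m with
    | zero => omega
    | succ n ih =>
      intro _ hle
      rcases Nat.eq_zero_or_pos n with h1 | h1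
      · subst h1
        exact hphistep 1 le_rfl (by omega)
      · have hn1 : 1 ≤ n := h1
        have := ih hn1 (by omega)
        have h2 := hphistep (n+1) (by omega) hle
        linarith
  have hfin := hchain (k-1) (by omega) le_rfl
  have hkk : (k - 1) + 1 = k := by omega
  rw [hkk, ← hcyc] at hfin
  exact lt_irrefl _ hfin
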